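/- Let A be a graded commutative ℝ-algebra with A^i = 0 for i > 2n and zero differential, satisfying the hard Lefschetz property with respect to ω ∈ A², and let (A ⊗ Λ(y), dy = ω) be the elementary extension. Suppose a quadruple Massey product ⟨a1, a2, a3, a4⟩ is defined with all deg(a_i) ≤ n. Then each a_i is represented by a closed element α_i ∈ A, and the choice γ_{ii} = α_i, γ_{i,i+1} = β_{i,i+1}·y, γ_{ij} = 0 for j ≥ i+2 satisfies the Massey defining system equations and yields the zero class; hence 0 ∈ ⟨a1, a2, a3, a4⟩. -/

import Mathlib

/-- Product in the elementary extension `A ⊗ Λ(y)` of a graded algebra `A` with zero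
differential (`deg y = 1`, `y² = 0`, `y·α = ε(α)·y`): a pair `(α, β)` stands for `α + β·y`,
and `ε` is the parity involution `ε(α) = (-1)^{|α|} α`. -/
def emul {A : Type*} [Ring A] [Algebra ℝ A] (ε : A →ₗ[ℝ] A) (u v : A × A) : A × A :=
  (u.1 * v.1, u.1 * v.2 + u.2 * ε v.1)

/-- Differential of the elementary extension `(A ⊗ Λ(y), dy = ω)`: `d(α + β·y) = ε(β)·ω`. -/
def eD {A : Type*} [Ring A] [Algebra ℝ A] (ε : A →ₗ[ℝ] A) (ω : A) (u : A × A) : A × A :=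
  (ε u.2 * ω, 0)

/-- Let `A` be a graded-commutative ℝ-algebra with `Aⁱ = 0` for `i > 2n`,
zero differential, satisfying hard Lefschetz with respect to `ω ∈ A²`, and let
`(A ⊗ Λ(y), dy = ω)` be the elementary extension.  Suppose a quadruple Massey product
`⟨a₁, a₂, a₃, a₄⟩` is defined, with all `deg aᵢ = pᵢ ≤ n`, by a defining system `γ` with
homogeneous entries of degrees `D i j = Σ_{k=i}^{j} p_k - (j-i)`.  Then each `aᵢ` is
represented by a closed element `αᵢ ∈ A`, and the choice `γ'_{ii} = αᵢ`,
`γ'_{i,i+1} = β_{i,i+1}·y`, `γ'_{ij} = 0` for `j ≥ i+2` is a defining system whose associated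
Massey cocycle is zero; hence `0 ∈ ⟨a₁, a₂, a₃, a₄⟩`. -/
theorem statement13 {A : Type*} [Ring A] [Algebra ℝ A] (𝒜 : ℕ → Submodule ℝ A)
    [GradedAlgebra 𝒜] (n : ℕ) (ω : A) (hω : ω ∈ 𝒜 2)
    (hbound : ∀ i, 2 * n < i → 𝒜 i = ⊥)
    (hcomm : ∀ i j, ∀ u ∈ 𝒜 i, ∀ v ∈ 𝒜 j, u * v = ((-1 : ℝ) ^ (i * j)) • (v * u))
    (hLef : ∀ k ≤ n, ∀ z ∈ 𝒜 (n + k), ∃! β, β ∈ 𝒜 (n - k) ∧ β * ω ^ k = z)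
    (ε : A →ₗ[ℝ] A) (hε : ∀ i, ∀ v ∈ 𝒜 i, ε v = ((-1 : ℝ) ^ i) • v)
    (p : ℕ → ℕ) (hp : ∀ i, 0 < p i) (hpn : ∀ i, 1 ≤ i → i ≤ 4 → p i ≤ n)
    (D : ℕ → ℕ → ℕ) (hD : ∀ i j, D i j = (∑ k ∈ Finset.Icc i j, p k) - (j - i))
    (γ : ℕ → ℕ → A × A)
    (hhom1 : ∀ i j, 1 ≤ i → i ≤ j → j ≤ 4 → (γ i j).1 ∈ 𝒜 (D i j))
    (hhom2 : ∀ i j, 1 ≤ i → i ≤ j → j ≤ 4 → (γ i j).2 ∈ 𝒜 (D i j - 1))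
    (hsys : ∀ i j, 1 ≤ i → i ≤ j → j ≤ 4 → (i, j) ≠ (1, 4) →
      eD ε ω (γ i j) =
        ∑ k ∈ Finset.Ico i j, ((-1 : ℝ) ^ (D i k)) • emul ε (γ i k) (γ (k + 1) j)) :
    ∃ α β : ℕ → A, ∃ γ' : ℕ → ℕ → A × A,
      -- each `aᵢ` is represented by the closed element `αᵢ ∈ A`:
      (∀ i, 1 ≤ i → i ≤ 4 → α i ∈ 𝒜 (p i) ∧
        ∃ v : A × A, γ i i - (α i, (0 : A)) = eD ε ω v) ∧
      -- the special defining system: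
      (γ' = fun i j => if j = i then (α i, (0 : A))
        else if j = i + 1 then ((0 : A), β i) else (0, 0)) ∧
      (∀ i, 1 ≤ i → i ≤ 3 → β i ∈ 𝒜 (D i (i + 1) - 1)) ∧
      (∀ i j, 1 ≤ i → i ≤ j → j ≤ 4 → (i, j) ≠ (1, 4) →
        eD ε ω (γ' i j) =
          ∑ k ∈ Finset.Ico i j, ((-1 : ℝ) ^ (D i k)) • emul ε (γ' i k) (γ' (k + 1) j)) ∧
      -- whose associated Massey cocycle is zero:
      (∑ k ∈ Finset.Ico 1 4, ((-1 : ℝ) ^ (D 1 k)) • emul ε (γ' 1 k) (γ' (k + 1) 4)) = 0 := by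

  -- injectivity of multiplication by ω on degrees < n (from hard Lefschetz)
  have hinj : ∀ m, m < n → ∀ b ∈ 𝒜 m, b * ω = 0 → b = 0 := by
    intro m hm b hb hbω
    obtain ⟨β', -, huniq⟩ := hLef (n - m) (Nat.sub_le n m) 0 (Submodule.zero_mem _)
    obtain ⟨j, hj⟩ : ∃ j, n - m = j + 1 := ⟨n - m - 1, by omega⟩
    have hmem : b ∈ 𝒜 (n - (n - m)) := by rwa [Nat.sub_sub_self hm.le]
    have hbpow : b * ω ^ (n - m) = 0 := by
      rw [hj, pow_succ', ← mul_assoc, hbω, zero_mul]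
    have h1 : b = β' := huniq b ⟨hmem, hbpow⟩
    have h2 : (0 : A) = β' := huniq 0 ⟨Submodule.zero_mem _, by rw [zero_mul]⟩
    rw [h1, ← h2]
  have hDii : ∀ i, D i i = p i := by
    intro i; rw [hD]; simp
  -- second components of the diagonal entries vanish
  have hzero : ∀ i, 1 ≤ i → i ≤ 4 → (γ i i).2 = 0 := by
    intro i h1 h4
    have hb : (γ i i).2 ∈ 𝒜 (p i - 1) := by
      have := hhom2 i i h1 le_rfl h4; rwa [hDii] at this
    have heq := hsys i i h1 le_rfl h4 (by simp [Prod.ext_iff]; omega)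
    rw [Finset.Ico_self, Finset.sum_empty] at heq
    have h1' : ε (γ i i).2 * ω = 0 := congrArg Prod.fst heq
    rw [hε _ _ hb, smul_mul_assoc, smul_eq_zero] at h1'
    have hbω : (γ i i).2 * ω = 0 := by
      rcases h1' with h | h
      · exact absurd h (pow_ne_zero _ (by norm_num))
      · exact h
    exact hinj (p i - 1) (by have := hpn i h1 h4; have := hp i; omega) _ hb hbω
  refine ⟨fun i => (γ i i).1, fun i => (γ i (i + 1)).2,
    fun i j => if j = i then ((γ i i).1, (0 : A))
      else if j = i + 1 then ((0 : A), (γ i (i + 1)).2) else (0, 0),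
    ?_, rfl, ?_, ?_, ?_⟩
  · intro i h1 h4
    refine ⟨by have := hhom1 i i h1 le_rfl h4; rwa [hDii] at this, 0, ?_⟩
    simp [eD, Prod.ext_iff, hzero i h1 h4]
  · intro i h1 h3
    exact hhom2 i (i + 1) h1 (by omega) (by omega)
  · intro i j h1 hij h4 hne
    have hne' : ¬(i = 1 ∧ j = 4) := by simpa [Prod.ext_iff] using hne
    have hj : j = i ∨ j = i + 1 ∨ j = i + 2 := by omega
    rcases hj with rfl | rfl | rfl
    · simp [eD, Finset.Ico_self]
    · -- case j = i + 1
      have heq := hsys i (i + 1) h1 (by omega) h4 (by simp [Prod.ext_iff]; omega)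
      rw [Nat.Ico_succ_singleton, Finset.sum_singleton] at heq
      have e1 := congrArg Prod.fst heq
      simp only [eD, emul, Prod.smul_fst, Prod.smul_snd] at e1
      rw [Nat.Ico_succ_singleton, Finset.sum_singleton]
      refine Prod.ext ?_ ?_ <;>
        simp [eD, emul, show i + 1 ≠ i by omega, hzero i h1 (by omega),
          hzero (i + 1) (by omega) h4, e1]
    · -- case j = i + 2
      have heq := hsys i (i + 2) h1 (by omega) h4 (by simp [Prod.ext_iff]; omega)
      have hsum : ∀ f : ℕ → A × A, ∑ k ∈ Finset.Ico i (i + 2), f k = f i + f (i + 1) := by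
        intro f
        rw [show i + 2 = (i + 1) + 1 by omega, Finset.sum_Ico_succ_top (by omega),
          Nat.Ico_succ_singleton, Finset.sum_singleton]
      rw [hsum] at heq
      have e2 := congrArg Prod.snd heq
      simp only [eD, emul, Prod.smul_snd, Prod.snd_add, hzero i h1 (by omega),
        hzero (i + 2) (by omega) h4, zero_mul, mul_zero, add_zero, zero_add] at e2
      rw [hsum]
      refine Prod.ext ?_ ?_ <;>
        simp [eD, emul, show i + 2 ≠ i by omega, show i + 2 ≠ i + 1 by omega,
          show i + 1 ≠ i by omega, ← e2]
  · have hsum : ∀ f : ℕ → A × A, ∑ k ∈ Finset.Ico 1 4, f k = f 1 + f 2 + f 3 := by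
      intro f
      rw [show (4 : ℕ) = 3 + 1 by norm_num, Finset.sum_Ico_succ_top (by norm_num),
        show (3 : ℕ) = 2 + 1 by norm_num, Finset.sum_Ico_succ_top (by norm_num),
        Nat.Ico_succ_singleton, Finset.sum_singleton]
    rw [hsum]
    norm_num [emul, Prod.ext_iff]
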